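/- Let p be an odd integer, p ≥ 3, and r an integer with |r| < p and gcd(r,p) = 1, and define V(x) = (px+r)/2 for x odd, V(x) = x/2 for x even. If there exist an odd integer l, integers α ≥ 0, β ≥ 1, and k ≥ 1 not divisible by 2 or p, such that V(p^α 2^β k − l) = p^{α+1} 2^{β-1} k − l, then r = (p−2)l; consequently, since |r| < p, r = p−2 or r = 2−p. -/
import Mathlib


theorem chain_structure_forces_r (p r : ℤ) (hp : 3 ≤ p) (hpodd : Odd p)
    (hr : |r| < p) (hrodd : Odd r) (hcop : IsCoprime r p)
    (l k : ℤ) (α β : ℕ) (hβ : 1 ≤ β) (hl : Odd l) (hk : 1 ≤ k)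
    (hk2 : ¬ (2 : ℤ) ∣ k) (hkp : ¬ p ∣ k)
    (hposarg : 0 < p ^ α * 2 ^ β * k - l) (hoddarg : Odd (p ^ α * 2 ^ β * k - l))
    (heq : (fun x : ℤ => if x % 2 = 0 then x / 2 else (p * x + r) / 2)
        (p ^ α * 2 ^ β * k - l) = p ^ (α + 1) * 2 ^ (β - 1) * k - l) :
    r = (p - 2) * l ∧ (r = p - 2 ∨ r = 2 - p) := by
  simp only at heq
  have hmod : (p ^ α * 2 ^ β * k - l) % 2 ≠ 0 := by
    rcases hoddarg with ⟨m, hm⟩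
    omega
  rw [if_neg hmod] at heq
  have heven : (2 : ℤ) ∣ p * (p ^ α * 2 ^ β * k - l) + r := by
    rcases hpodd with ⟨a, ha⟩
    rcases hoddarg with ⟨b, hb⟩
    rcases hrodd with ⟨c, hc⟩
    refine ⟨2 * a * b + a + b + c + 1, ?_⟩
    rw [hb, ha, hc]; ring
  obtain ⟨c, hc⟩ := heven
  rw [hc] at heq
  rw [Int.mul_ediv_cancel_left _ (by norm_num)] at heq
  obtain ⟨β', rfl⟩ : ∃ β', β = β' + 1 := ⟨β - 1, by omega⟩
  simp only [Nat.add_sub_cancel] at heq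
  have key : r = (p - 2) * l := by
    have hc' : p * (p ^ α * 2 ^ (β' + 1) * k - l) + r = 2 * (p ^ (α + 1) * 2 ^ β' * k - l) := by
      rw [hc, heq]
    linear_combination hc'
  refine ⟨key, ?_⟩
  have hpl := abs_lt.mp hr
  have hl3 : l = 1 ∨ l = -1 := by
    rcases hl with ⟨m, hm⟩
    by_contra h
    push_neg at h
    have : l ≤ -3 ∨ 3 ≤ l := by omega
    rcases this with h1 | h1 <;> nlinarith [hpl.1, hpl.2]
  rcases hl3 with rfl | rfl
  · left; linarith [key]
  · right; linarith [key]
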